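/- For s sufficiently large, ∑_{r=1}^{s} ((1 + 3/r) log s − log r + 2)² ≤ 10.1·s + O(log³ s); in particular 16 ∑_{r=1}^{s} ((1+3/r)log s − log r + 2)² < 161·s for all sufficiently large s. -/

import Mathlib

open Finset


lemma sum_split (f : ℝ → ℝ) : ∀ s : ℕ, 1 ≤ s →
    ∑ r ∈ Finset.Icc 1 s, f r = f 1 + ∑ i ∈ Finset.Ico 1 s, f ((i : ℕ) + 1 : ℕ) := by
  intro s hs
  induction s, hs using Nat.le_induction with
  | base => simp
  | succ n hn ih =>
    rw [Finset.sum_Icc_succ_top (by omega), Finset.sum_Ico_succ_top (by omega), ih]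
    push_cast
    ring

lemma sum_Icc_le (f : ℝ → ℝ) {s : ℕ} (hs : 1 ≤ s) (hf : AntitoneOn f (Set.Icc 1 (s:ℝ))) :
    ∑ r ∈ Finset.Icc 1 s, f r ≤ f 1 + ∫ x in (1:ℝ)..(s:ℝ), f x := by
  rw [sum_split f s hs]
  have hf2 : AntitoneOn f (Set.Icc ((1:ℕ):ℝ) ((s:ℕ):ℝ)) := by exact_mod_cast hf
  have := hf2.sum_le_integral_Ico hs
  push_cast at this ⊢
  linarith

lemma est_S1 {s : ℕ} (hs : 1 ≤ s) :
    ∑ r ∈ Finset.Icc 1 s, (Real.log s - Real.log r) ≤ s := by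
  have hs1 : (1:ℝ) ≤ (s:ℝ) := by exact_mod_cast hs
  set L := Real.log s with hL
  have hanti : AntitoneOn (fun x : ℝ => L - Real.log x) (Set.Icc 1 (s:ℝ)) := by
    intro x hx y hy hxy
    have : Real.log x ≤ Real.log y := Real.log_le_log (lt_of_lt_of_le zero_lt_one hx.1) hxy
    simp only; linarith
  have hint : ∫ x in (1:ℝ)..(s:ℝ), (L - Real.log x) = (s:ℝ) - L - 1 := by
    have hd : ∀ x ∈ Set.uIcc (1:ℝ) (s:ℝ),
        HasDerivAt (fun x : ℝ => x * (L - Real.log x) + x) (L - Real.log x) x := by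
      intro x hx
      rw [Set.uIcc_of_le hs1] at hx
      have hx0 : x ≠ 0 := by have := hx.1; intro h; rw [h] at this; linarith
      have h1 : HasDerivAt (fun x : ℝ => x * (L - Real.log x))
          (1 * (L - Real.log x) + x * (0 - x⁻¹)) x :=
        (hasDerivAt_id x).mul ((hasDerivAt_const x L).sub (Real.hasDerivAt_log hx0))
      have h2 := h1.add (hasDerivAt_id' x)
      have hxx : x * x⁻¹ = 1 := mul_inv_cancel₀ hx0
      exact h2.congr_deriv (by linear_combination (-1:ℝ) * hxx)
    have hc : ContinuousOn (fun x : ℝ => L - Real.log x) (Set.uIcc (1:ℝ) (s:ℝ)) := by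
      apply continuousOn_const.sub
      apply Real.continuousOn_log.mono
      intro x hx
      rw [Set.uIcc_of_le hs1] at hx
      simp only [Set.mem_compl_iff, Set.mem_singleton_iff]
      intro h; rw [h] at hx; linarith [hx.1]
    rw [intervalIntegral.integral_eq_sub_of_hasDerivAt hd (hc.intervalIntegrable)]
    simp [Real.log_one]
    ring
  calc ∑ r ∈ Finset.Icc 1 s, (L - Real.log r)
      ≤ (L - Real.log 1) + ∫ x in (1:ℝ)..(s:ℝ), (L - Real.log x) :=
        sum_Icc_le (fun x => L - Real.log x) hs hanti
    _ ≤ (s:ℝ) := by rw [hint, Real.log_one]; ring_nf; linarith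

lemma est_S2 {s : ℕ} (hs : 1 ≤ s) :
    ∑ r ∈ Finset.Icc 1 s, (Real.log s - Real.log r) ^ 2 ≤ 2 * s := by
  have hs1 : (1:ℝ) ≤ (s:ℝ) := by exact_mod_cast hs
  set L := Real.log s with hL
  have hLr : ∀ x : ℝ, 1 ≤ x → x ≤ s → 0 ≤ L - Real.log x := by
    intro x h1 h2
    have := Real.log_le_log (lt_of_lt_of_le zero_lt_one h1) h2
    linarith
  have hanti : AntitoneOn (fun x : ℝ => (L - Real.log x) ^ 2) (Set.Icc 1 (s:ℝ)) := by
    intro x hx y hy hxy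
    have h1 : Real.log x ≤ Real.log y := Real.log_le_log (lt_of_lt_of_le zero_lt_one hx.1) hxy
    have h2 := hLr y hy.1 hy.2
    simp only
    apply pow_le_pow_left₀ h2
    linarith
  have hint : ∫ x in (1:ℝ)..(s:ℝ), (L - Real.log x) ^ 2
      = 2 * (s:ℝ) - (L ^ 2 + 2 * L + 2) := by
    have hd : ∀ x ∈ Set.uIcc (1:ℝ) (s:ℝ),
        HasDerivAt (fun x : ℝ => x * ((L - Real.log x) ^ 2 + 2 * (L - Real.log x) + 2))
          ((L - Real.log x) ^ 2) x := by
      intro x hx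
      rw [Set.uIcc_of_le hs1] at hx
      have hx0 : x ≠ 0 := by have := hx.1; intro h; rw [h] at this; linarith
      have hlog := Real.hasDerivAt_log hx0
      have hg : HasDerivAt (fun x : ℝ => L - Real.log x) (0 - x⁻¹) x :=
        (hasDerivAt_const x L).sub hlog
      have hsq : HasDerivAt (fun x : ℝ => (L - Real.log x) ^ 2)
          (2 * (L - Real.log x) ^ 1 * (0 - x⁻¹)) x := hg.pow 2
      have hin : HasDerivAt (fun x : ℝ => (L - Real.log x) ^ 2 + 2 * (L - Real.log x) + 2)
          (2 * (L - Real.log x) ^ 1 * (0 - x⁻¹) + (0 * (L - Real.log x) + 2 * (0 - x⁻¹)) + 0) x :=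
        (hsq.add (((hasDerivAt_const x (2:ℝ)).mul hg))).add (hasDerivAt_const x 2)
      have h1 := (hasDerivAt_id' x).mul hin
      have hxx : x * x⁻¹ = 1 := mul_inv_cancel₀ hx0
      exact h1.congr_deriv (by linear_combination (-(2 * (L - Real.log x)) - 2) * hxx)
    have hc : ContinuousOn (fun x : ℝ => (L - Real.log x) ^ 2) (Set.uIcc (1:ℝ) (s:ℝ)) := by
      apply (continuousOn_const.sub (Real.continuousOn_log.mono ?_)).pow
      intro x hx
      rw [Set.uIcc_of_le hs1] at hx
      simp only [Set.mem_compl_iff, Set.mem_singleton_iff]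
      intro h; rw [h] at hx; linarith [hx.1]
    rw [intervalIntegral.integral_eq_sub_of_hasDerivAt hd (hc.intervalIntegrable)]
    simp [Real.log_one]
    ring
  calc ∑ r ∈ Finset.Icc 1 s, (L - Real.log r) ^ 2
      ≤ (L - Real.log 1) ^ 2 + ∫ x in (1:ℝ)..(s:ℝ), (L - Real.log x) ^ 2 :=
        sum_Icc_le (fun x => (L - Real.log x) ^ 2) hs hanti
    _ ≤ 2 * (s:ℝ) := by
        rw [hint, Real.log_one]
        have : 0 ≤ L := by rw [hL]; exact Real.log_natCast_nonneg s
        nlinarith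

lemma est_H1 {s : ℕ} (hs : 1 ≤ s) :
    ∑ r ∈ Finset.Icc 1 s, (r : ℝ)⁻¹ ≤ 1 + Real.log s := by
  have hs1 : (1:ℝ) ≤ (s:ℝ) := by exact_mod_cast hs
  have hanti : AntitoneOn (fun x : ℝ => x⁻¹) (Set.Icc 1 (s:ℝ)) := by
    intro x hx y hy hxy
    exact inv_anti₀ (lt_of_lt_of_le zero_lt_one hx.1) hxy
  have hint : ∫ x in (1:ℝ)..(s:ℝ), x⁻¹ = Real.log s := by
    rw [integral_inv (by rw [Set.uIcc_of_le hs1]; intro h; linarith [h.1])]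
    simp
  calc ∑ r ∈ Finset.Icc 1 s, (r:ℝ)⁻¹
      ≤ (1:ℝ)⁻¹ + ∫ x in (1:ℝ)..(s:ℝ), x⁻¹ := sum_Icc_le (fun x => x⁻¹) hs hanti
    _ = 1 + Real.log s := by rw [hint]; norm_num

lemma est_H2 {s : ℕ} (hs : 1 ≤ s) :
    ∑ r ∈ Finset.Icc 1 s, ((r : ℝ)⁻¹) ^ 2 ≤ 2 := by
  have hs1 : (1:ℝ) ≤ (s:ℝ) := by exact_mod_cast hs
  have key : ∀ x : ℝ, x ≠ 0 → (x⁻¹) ^ 2 = x ^ (-2 : ℤ) := by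
    intro x hx
    rw [show ((-2:ℤ)) = -((2:ℕ):ℤ) by norm_num, zpow_neg, zpow_natCast, inv_pow]
  have hanti : AntitoneOn (fun x : ℝ => (x⁻¹) ^ 2) (Set.Icc 1 (s:ℝ)) := by
    intro x hx y hy hxy
    have hx0 : 0 < x := lt_of_lt_of_le zero_lt_one hx.1
    have : y⁻¹ ≤ x⁻¹ := inv_anti₀ hx0 hxy
    have hy0 : 0 ≤ y⁻¹ := inv_nonneg.2 (le_trans (le_of_lt hx0) hxy)
    exact pow_le_pow_left₀ hy0 this 2
  have hint : ∫ x in (1:ℝ)..(s:ℝ), (x⁻¹) ^ 2 ≤ 1 := by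
    have heq : ∫ x in (1:ℝ)..(s:ℝ), (x⁻¹) ^ 2 = ∫ x in (1:ℝ)..(s:ℝ), x ^ (-2 : ℤ) := by
      apply intervalIntegral.integral_congr
      intro x hx
      rw [Set.uIcc_of_le hs1] at hx
      exact key x (by intro h; rw [h] at hx; linarith [hx.1])
    rw [heq, integral_zpow]
    · have hsp : (0:ℝ) < (s:ℝ) := lt_of_lt_of_le zero_lt_one hs1
      have : (0:ℝ) < (s:ℝ) ^ (-2 + 1 : ℤ) := by positivity
      simp only [show (-2 + 1 : ℤ) = -1 by norm_num] at this ⊢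
      rw [zpow_neg, zpow_one]
      have : (0:ℝ) ≤ ((s:ℝ))⁻¹ := by positivity
      norm_num
      linarith
    · right
      constructor
      · norm_num
      · rw [Set.uIcc_of_le hs1]; intro h; linarith [h.1]
  calc ∑ r ∈ Finset.Icc 1 s, ((r:ℝ)⁻¹) ^ 2
      ≤ ((1:ℝ)⁻¹) ^ 2 + ∫ x in (1:ℝ)..(s:ℝ), (x⁻¹) ^ 2 :=
        sum_Icc_le (fun x => (x⁻¹) ^ 2) hs hanti
    _ ≤ 2 := by simp only [inv_one, one_pow]; linarith [hint]

lemma main_est {s : ℕ} (hs : 3 ≤ s) :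
    ∑ r ∈ Finset.Icc 1 s, ((1 + 3 / (r : ℝ)) * Real.log s - Real.log r + 2) ^ 2
      ≤ 10 * (s:ℝ) + 55 * (Real.log s) ^ 3 := by
  have hs1 : 1 ≤ s := by omega
  set L := Real.log s with hL
  have hL1 : 1 ≤ L := by
    have hspos : (0:ℝ) < (s:ℝ) := by exact_mod_cast (show 0 < s by omega)
    rw [hL, Real.le_log_iff_exp_le hspos]
    calc Real.exp 1 ≤ 3 := le_of_lt (lt_trans Real.exp_one_lt_d9 (by norm_num))
      _ ≤ (s:ℝ) := by exact_mod_cast hs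
  have hL0 : 0 ≤ L := by linarith
  -- pointwise bound
  have hpt : ∀ r ∈ Finset.Icc 1 s,
      ((1 + 3 / (r : ℝ)) * L - Real.log r + 2) ^ 2
        ≤ (L - Real.log r) ^ 2 + 4 * (L - Real.log r)
          + 9 * L ^ 2 * ((r:ℝ)⁻¹) ^ 2 + (6 * L ^ 2 + 12 * L) * (r:ℝ)⁻¹ + 4 := by
    intro r hr
    rw [Finset.mem_Icc] at hr
    have hr1 : (1:ℝ) ≤ (r:ℝ) := by exact_mod_cast hr.1
    have hlr0 : 0 ≤ Real.log r := Real.log_natCast_nonneg r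
    have hlrL : Real.log r ≤ L := by
      rw [hL]; exact Real.log_le_log (by linarith) (by exact_mod_cast hr.2)
    have hu0 : 0 ≤ (r:ℝ)⁻¹ := by positivity
    have hdiv : 3 / (r : ℝ) = 3 * (r:ℝ)⁻¹ := by rw [div_eq_mul_inv]
    rw [hdiv]
    nlinarith [mul_nonneg (mul_nonneg hL0 hu0) hlr0, sq_nonneg ((r:ℝ)⁻¹), sq_nonneg (L - Real.log r)]
  have hsum := Finset.sum_le_sum hpt
  have hcard : (Finset.Icc 1 s).card = s := by
    rw [Nat.card_Icc]; omega
  have hsplit : ∑ r ∈ Finset.Icc 1 s,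
      ((L - Real.log r) ^ 2 + 4 * (L - Real.log r)
        + 9 * L ^ 2 * ((r:ℝ)⁻¹) ^ 2 + (6 * L ^ 2 + 12 * L) * (r:ℝ)⁻¹ + 4)
      = (∑ r ∈ Finset.Icc 1 s, (L - Real.log r) ^ 2)
        + 4 * (∑ r ∈ Finset.Icc 1 s, (L - Real.log r))
        + 9 * L ^ 2 * (∑ r ∈ Finset.Icc 1 s, ((r:ℝ)⁻¹) ^ 2)
        + (6 * L ^ 2 + 12 * L) * (∑ r ∈ Finset.Icc 1 s, (r:ℝ)⁻¹)
        + 4 * s := by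
    simp only [Finset.sum_add_distrib, Finset.mul_sum, Finset.sum_const, hcard, nsmul_eq_mul]
    ring
  have h1 := est_S1 hs1
  have h2 := est_S2 hs1
  have h3 := est_H1 hs1
  have h4 := est_H2 hs1
  rw [hsplit] at hsum
  have hc1 : 0 ≤ 9 * L ^ 2 := by positivity
  have hc2 : 0 ≤ 6 * L ^ 2 + 12 * L := by positivity
  have e3 : (6 * L ^ 2 + 12 * L) * (∑ r ∈ Finset.Icc 1 s, (r:ℝ)⁻¹)
      ≤ (6 * L ^ 2 + 12 * L) * (1 + L) := mul_le_mul_of_nonneg_left h3 hc2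
  have e4 : 9 * L ^ 2 * (∑ r ∈ Finset.Icc 1 s, ((r:ℝ)⁻¹) ^ 2) ≤ 9 * L ^ 2 * 2 :=
    mul_le_mul_of_nonneg_left h4 hc1
  nlinarith [hsum, h1, h2, e3, e4, sq_nonneg L, sq_nonneg (L - 1), mul_nonneg hL0 (sq_nonneg (L-1))]

lemma logcube {s : ℕ} (hs : 2^36 ≤ s) : 880 * (Real.log s) ^ 3 < (s:ℝ) := by
  have hs0 : (0:ℝ) < (s:ℝ) := by
    have : 0 < s := by omega
    exact_mod_cast this
  have hL0 : 0 ≤ Real.log s := Real.log_natCast_nonneg s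
  have h1 : Real.log s ≤ (s:ℝ) ^ ((1:ℝ)/6) / (1/6) :=
    Real.log_le_rpow_div (le_of_lt hs0) (by norm_num)
  have h1' : Real.log s ≤ 6 * (s:ℝ) ^ ((1:ℝ)/6) := by
    rw [div_div_eq_mul_div, div_one] at h1; linarith
  have hcube : (Real.log s) ^ 3 ≤ 216 * Real.sqrt s := by
    calc (Real.log s) ^ 3 ≤ (6 * (s:ℝ) ^ ((1:ℝ)/6)) ^ 3 := pow_le_pow_left₀ hL0 h1' 3
      _ = 216 * ((s:ℝ) ^ ((1:ℝ)/6)) ^ 3 := by ring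
      _ = 216 * Real.sqrt s := by
          rw [Real.sqrt_eq_rpow, ← Real.rpow_natCast ((s:ℝ) ^ ((1:ℝ)/6)) 3,
            ← Real.rpow_mul (le_of_lt hs0)]
          norm_num
  have hsq : (262144:ℝ) ≤ Real.sqrt s := by
    have : Real.sqrt ((262144:ℝ)^2) ≤ Real.sqrt s := by
      apply Real.sqrt_le_sqrt
      have : ((2:ℝ))^36 ≤ (s:ℝ) := by exact_mod_cast hs
      nlinarith
    rwa [Real.sqrt_sq (by norm_num)] at this
  have hmul : Real.sqrt s * Real.sqrt s = (s:ℝ) := Real.mul_self_sqrt (le_of_lt hs0)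
  have hsqpos : 0 < Real.sqrt s := by linarith
  nlinarith


open Finset

/-- Deterministic sum estimate: for large s,
∑_{r=1}^s ((1 + 3/r)log s − log r + 2)² ≤ 10.1·s + C·log³ s, and in particular
16·∑_{r=1}^s ((1 + 3/r)log s − log r + 2)² < 161·s. -/

theorem stmt16 :
    (∃ C : ℝ, 0 < C ∧ ∃ N : ℕ, ∀ s : ℕ, N ≤ s →
      ∑ r ∈ Finset.Icc 1 s, ((1 + 3 / (r : ℝ)) * Real.log s - Real.log r + 2) ^ 2
        ≤ 10.1 * (s:ℝ) + C * (Real.log s) ^ 3) ∧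
    (∃ N : ℕ, ∀ s : ℕ, N ≤ s →
      16 * ∑ r ∈ Finset.Icc 1 s, ((1 + 3 / (r : ℝ)) * Real.log s - Real.log r + 2) ^ 2
        < 161 * (s:ℝ)) := by
  constructor
  · refine ⟨55, by norm_num, 3, fun s hs => ?_⟩
    have h := main_est hs
    have hs0 : (0:ℝ) ≤ (s:ℝ) := Nat.cast_nonneg s
    nlinarith
  · refine ⟨2^36, fun s hs => ?_⟩
    have h := main_est (by omega : 3 ≤ s)
    have h2 := logcube hs
    nlinarith
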